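/- Let χ_t denote the normalized indicator (1/|B(0,t)|)·𝟙_{B(0,t)} of the ball of radius t in ℝⁿ. If |x| ≥ 2|y| then (∫₀^∞ t⁴·|χ_t(x−y) − χ_t(x)|² t^{−5} dt)^{1/2} ≤ C·|y|^{1/2}·|x|^{−n−1/2}. -/

import Mathlib

open MeasureTheory

/-- `χ_t`, the normalized indicator of the ball `B(0,t)` in `ℝⁿ`. -/
noncomputable def normInd (n : ℕ) (t : ℝ) (z : EuclideanSpace ℝ (Fin n)) : ℝ :=
  (Metric.ball (0 : EuclideanSpace ℝ (Fin n)) t).indicator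
    (fun _ => (volume (Metric.ball (0 : EuclideanSpace ℝ (Fin n)) t)).toReal⁻¹) z

theorem stmt_12 (n : ℕ) (hn : 0 < n) :
    ∃ C : ℝ, 0 < C ∧ ∀ x y : EuclideanSpace ℝ (Fin n),
      2 * ‖y‖ ≤ ‖x‖ →
      Real.sqrt (∫ t in Set.Ioi (0 : ℝ),
          t ^ 4 * (normInd n t (x - y) - normInd n t x) ^ 2 / t ^ 5) ≤
        C * ‖y‖ ^ ((1 : ℝ) / 2) * ‖x‖ ^ (-(n : ℝ) - 1 / 2) := by
  haveI : Nonempty (Fin n) := ⟨⟨0, hn⟩⟩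
  set c : ℝ := (volume (Metric.ball (0 : EuclideanSpace ℝ (Fin n)) 1)).toReal with hc_def
  have hc : 0 < c :=
    ENNReal.toReal_pos (Metric.measure_ball_pos volume 0 one_pos).ne' measure_ball_lt_top.ne
  have hvol : ∀ t : ℝ, 0 ≤ t →
      (volume (Metric.ball (0 : EuclideanSpace ℝ (Fin n)) t)).toReal = c * t ^ n := by
    intro t ht
    rw [Measure.addHaar_ball volume 0 ht, ENNReal.toReal_mul,
      ENNReal.toReal_ofReal (by positivity), finrank_euclideanSpace_fin, mul_comm]
  have hni : ∀ (t : ℝ) (z : EuclideanSpace ℝ (Fin n)),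
      normInd n t z = if ‖z‖ < t then (c * t ^ n)⁻¹ else 0 := by
    intro t z
    by_cases h : ‖z‖ < t
    · rw [normInd, Set.indicator_of_mem (mem_ball_zero_iff.2 h), if_pos h,
        hvol t (le_trans (norm_nonneg z) h.le)]
    · rw [normInd, Set.indicator_of_notMem (fun hm => h (mem_ball_zero_iff.1 hm)), if_neg h]
  set K : ℝ := 2 ^ (2 * n + 1) / c ^ 2 with hK_def
  have hK : 0 < K := by positivity
  refine ⟨Real.sqrt K, Real.sqrt_pos.2 hK, fun x y h2y => ?_⟩
  rcases eq_or_ne x 0 with rfl | hx0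
  · have hy : y = 0 := by
      simp only [norm_zero] at h2y
      have hy0 : ‖y‖ ≤ 0 := by linarith
      exact norm_eq_zero.1 (le_antisymm hy0 (norm_nonneg y))
    subst hy
    simp [Real.zero_rpow (by norm_num : ((1:ℝ)/2) ≠ 0)]
  have hx : 0 < ‖x‖ := norm_pos_iff.2 hx0
  set a : ℝ := min ‖x - y‖ ‖x‖ with ha_def
  set b : ℝ := max ‖x - y‖ ‖x‖ with hb_def
  have hxy2 : ‖x‖ / 2 ≤ ‖x - y‖ := by
    have := norm_sub_norm_le x y
    have h' : ‖x - y‖ ≥ ‖x‖ - ‖y‖ := norm_sub_norm_le x y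
    linarith
  have ha2 : ‖x‖ / 2 ≤ a := le_min hxy2 (by linarith)
  have ha : 0 < a := lt_of_lt_of_le (by positivity) ha2
  have hab : a ≤ b := min_le_max
  have hba : b - a ≤ ‖y‖ := by
    have h1 : b - a = |‖x‖ - ‖x - y‖| := max_sub_min_eq_abs _ _
    have h2 : |‖x‖ - ‖x - y‖| ≤ ‖x - (x - y)‖ := abs_norm_sub_norm_le _ _
    have h3 : ‖x - (x - y)‖ = ‖y‖ := by rw [sub_sub_cancel]
    linarith
  set g : ℝ → ℝ := fun t => t ^ 4 * ((c * t ^ n)⁻¹) ^ 2 / t ^ 5 with hg_def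
  have step1 : ∀ t ∈ Set.Ioi (0 : ℝ),
      t ^ 4 * (normInd n t (x - y) - normInd n t x) ^ 2 / t ^ 5
        = Set.indicator (Set.Ioc a b) g t := by
    intro t ht
    rw [hni, hni]
    by_cases h1 : ‖x - y‖ < t <;> by_cases h2 : ‖x‖ < t
    · rw [if_pos h1, if_pos h2, Set.indicator_of_notMem
        (fun hm => absurd hm.2 (not_le.2 (max_lt h1 h2)))]
      ring
    · rw [if_pos h1, if_neg h2, Set.indicator_of_mem
        (Set.mem_Ioc.2 ⟨lt_of_le_of_lt (min_le_left _ _) h1,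
          le_trans (not_lt.1 h2) (le_max_right _ _)⟩)]
      simp only [hg_def]
      ring
    · rw [if_neg h1, if_pos h2, Set.indicator_of_mem
        (Set.mem_Ioc.2 ⟨lt_of_le_of_lt (min_le_right _ _) h2,
          le_trans (not_lt.1 h1) (le_max_left _ _)⟩)]
      simp only [hg_def]
      ring
    · rw [if_neg h1, if_neg h2, Set.indicator_of_notMem
        (fun hm => absurd hm.1 (not_lt.2 (le_min (not_lt.1 h1) (not_lt.1 h2))))]
      ring
  have step2 : (∫ t in Set.Ioi (0 : ℝ),
      t ^ 4 * (normInd n t (x - y) - normInd n t x) ^ 2 / t ^ 5)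
        = ∫ t in Set.Ioc a b, g t := by
    have hsub : Set.Ioc a b ∩ Set.Ioi 0 = Set.Ioc a b :=
      Set.inter_eq_self_of_subset_left (fun t ht => lt_trans ha ht.1)
    rw [setIntegral_congr_fun measurableSet_Ioi step1,
      integral_indicator measurableSet_Ioc, Measure.restrict_restrict measurableSet_Ioc, hsub]
  set M : ℝ := (c ^ 2 * a ^ (2 * n + 1))⁻¹ with hM_def
  have hgval : ∀ t : ℝ, 0 < t → g t = (c ^ 2 * t ^ (2 * n + 1))⁻¹ := by
    intro t ht
    simp only [hg_def]
    field_simp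
    ring
  have step3 : (∫ t in Set.Ioc a b, g t) ≤ M * (b - a) := by
    have hvf : volume (Set.Ioc a b) < ⊤ := by
      rw [Real.volume_Ioc]; exact ENNReal.ofReal_lt_top
    have hbd : ∀ᵐ t ∂(volume : Measure ℝ), t ∈ Set.Ioc a b → ‖g t‖ ≤ M := by
      refine Filter.Eventually.of_forall (fun t ht => ?_)
      have htpos : 0 < t := lt_trans ha ht.1
      rw [hgval t htpos, Real.norm_eq_abs, abs_of_nonneg (by positivity)]
      refine inv_anti₀ (by positivity) ?_
      exact mul_le_mul_of_nonneg_left (pow_le_pow_left₀ ha.le ht.1.le _) (sq_nonneg c)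
    have := norm_setIntegral_le_of_norm_le_const_ae' hvf hbd
    rw [Measure.real, Real.volume_Ioc, ENNReal.toReal_ofReal (by linarith)] at this
    exact le_trans (le_abs_self _) this
  have step4 : M * (b - a) ≤ K * ‖y‖ * (‖x‖ ^ (2 * n + 1))⁻¹ := by
    have hM2 : M ≤ K * (‖x‖ ^ (2 * n + 1))⁻¹ := by
      have h1 : (‖x‖ / 2) ^ (2 * n + 1) ≤ a ^ (2 * n + 1) :=
        pow_le_pow_left₀ (by positivity) ha2 _
      have h2 : M ≤ (c ^ 2 * (‖x‖ / 2) ^ (2 * n + 1))⁻¹ :=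
        inv_anti₀ (by positivity) (mul_le_mul_of_nonneg_left h1 (sq_nonneg c))
      have h3 : (c ^ 2 * (‖x‖ / 2) ^ (2 * n + 1))⁻¹ = K * (‖x‖ ^ (2 * n + 1))⁻¹ := by
        rw [hK_def]
        field_simp
        try ring
        rw [mul_assoc, ← mul_pow]; norm_num
      linarith
    calc M * (b - a) ≤ (K * (‖x‖ ^ (2 * n + 1))⁻¹) * ‖y‖ :=
          mul_le_mul hM2 hba (by linarith) (by positivity)
      _ = K * ‖y‖ * (‖x‖ ^ (2 * n + 1))⁻¹ := by ring
  have hR : 0 ≤ Real.sqrt K * ‖y‖ ^ ((1:ℝ)/2) * ‖x‖ ^ (-(n:ℝ) - 1/2) := by positivity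
  have hRsq : (Real.sqrt K * ‖y‖ ^ ((1:ℝ)/2) * ‖x‖ ^ (-(n:ℝ) - 1/2)) ^ 2
      = K * ‖y‖ * (‖x‖ ^ (2 * n + 1))⁻¹ := by
    rw [mul_pow, mul_pow, Real.sq_sqrt hK.le,
      ← Real.rpow_natCast (‖y‖ ^ ((1:ℝ)/2)) 2, ← Real.rpow_mul (norm_nonneg y),
      ← Real.rpow_natCast (‖x‖ ^ (-(n:ℝ) - 1/2)) 2, ← Real.rpow_mul (norm_nonneg x)]
    push_cast
    rw [show (1 / 2 : ℝ) * 2 = 1 by norm_num, Real.rpow_one,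
      show (-(n:ℝ) - 1/2) * 2 = -((2 * n + 1 : ℕ) : ℝ) by push_cast; ring,
      Real.rpow_neg (norm_nonneg x), Real.rpow_natCast]
  calc Real.sqrt (∫ t in Set.Ioi (0 : ℝ),
        t ^ 4 * (normInd n t (x - y) - normInd n t x) ^ 2 / t ^ 5)
      ≤ Real.sqrt ((Real.sqrt K * ‖y‖ ^ ((1:ℝ)/2) * ‖x‖ ^ (-(n:ℝ) - 1/2)) ^ 2) := by
        apply Real.sqrt_le_sqrt
        rw [step2, hRsq]
        exact le_trans step3 step4
    _ = _ := Real.sqrt_sq hR
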